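/- Let (C, Δ_C, α_C) be a Hom-coassociative coalgebra and (M, α_M) a C-comodule with structure map δ. Then for every k ≥ 0, the map δ^{(k)} = (α_C^{2k} ⊗ id_M) ∘ δ is again the structure map of a C-comodule on (M, α_M). -/
import Mathlib


open TensorProduct

section Aux

variable {F : Type*} [Field F] {C M : Type*}
    [AddCommGroup C] [Module F C] [AddCommGroup M] [Module F M]

private lemma aux_assoc (β : C →ₗ[F] C) :
    TensorProduct.map β (TensorProduct.map β (LinearMap.id : M →ₗ[F] M)) ∘ₗ
      (TensorProduct.assoc F C C M).toLinearMap =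
    (TensorProduct.assoc F C C M).toLinearMap ∘ₗ
      TensorProduct.map (TensorProduct.map β β) LinearMap.id := by
  apply TensorProduct.ext_threefold
  intro x y z
  simp

/-- One twisting step. -/
private lemma aux_step (ΔC : C →ₗ[F] C ⊗[F] C) (αC β : C →ₗ[F] C) (αM : M →ₗ[F] M)
    (δ : M →ₗ[F] C ⊗[F] M)
    (hβα : β ∘ₗ αC = αC ∘ₗ β)
    (hβ : ΔC ∘ₗ β = TensorProduct.map β β ∘ₗ ΔC)
    (hδm : δ ∘ₗ αM = TensorProduct.map αC αM ∘ₗ δ)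
    (hδ : TensorProduct.map αC δ ∘ₗ δ =
      (TensorProduct.assoc F C C M).toLinearMap ∘ₗ TensorProduct.map ΔC αM ∘ₗ δ) :
    (TensorProduct.map β LinearMap.id ∘ₗ δ) ∘ₗ αM =
      TensorProduct.map αC αM ∘ₗ (TensorProduct.map β LinearMap.id ∘ₗ δ) ∧
    TensorProduct.map αC (TensorProduct.map β LinearMap.id ∘ₗ δ) ∘ₗ
        (TensorProduct.map β LinearMap.id ∘ₗ δ) =
      (TensorProduct.assoc F C C M).toLinearMap ∘ₗ TensorProduct.map ΔC αM ∘ₗ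
        (TensorProduct.map β LinearMap.id ∘ₗ δ) := by
  constructor
  · calc (TensorProduct.map β LinearMap.id ∘ₗ δ) ∘ₗ αM
        = TensorProduct.map β LinearMap.id ∘ₗ (δ ∘ₗ αM) := by rw [LinearMap.comp_assoc]
      _ = TensorProduct.map β LinearMap.id ∘ₗ TensorProduct.map αC αM ∘ₗ δ := by rw [hδm]
      _ = (TensorProduct.map β LinearMap.id ∘ₗ TensorProduct.map αC αM) ∘ₗ δ := by
            rw [LinearMap.comp_assoc]
      _ = TensorProduct.map (β ∘ₗ αC) (LinearMap.id ∘ₗ αM) ∘ₗ δ := by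
            rw [TensorProduct.map_comp]
      _ = TensorProduct.map (αC ∘ₗ β) (αM ∘ₗ LinearMap.id) ∘ₗ δ := by
            rw [hβα, LinearMap.id_comp, LinearMap.comp_id]
      _ = (TensorProduct.map αC αM ∘ₗ TensorProduct.map β LinearMap.id) ∘ₗ δ := by
            rw [TensorProduct.map_comp]
      _ = TensorProduct.map αC αM ∘ₗ (TensorProduct.map β LinearMap.id ∘ₗ δ) := by
            rw [LinearMap.comp_assoc]
  · calc TensorProduct.map αC (TensorProduct.map β LinearMap.id ∘ₗ δ) ∘ₗ
        (TensorProduct.map β LinearMap.id ∘ₗ δ)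
        = (TensorProduct.map (αC ∘ₗ β) ((TensorProduct.map β LinearMap.id ∘ₗ δ) ∘ₗ LinearMap.id)) ∘ₗ δ := by
            rw [← LinearMap.comp_assoc, ← TensorProduct.map_comp]
      _ = (TensorProduct.map (β ∘ₗ αC) (TensorProduct.map β LinearMap.id ∘ₗ (δ ∘ₗ LinearMap.id))) ∘ₗ δ := by
            rw [hβα, LinearMap.comp_assoc]
      _ = ((TensorProduct.map β (TensorProduct.map β LinearMap.id)) ∘ₗ TensorProduct.map αC δ) ∘ₗ δ := by
            rw [TensorProduct.map_comp, LinearMap.comp_id]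
      _ = TensorProduct.map β (TensorProduct.map β LinearMap.id) ∘ₗ
            (TensorProduct.map αC δ ∘ₗ δ) := by rw [LinearMap.comp_assoc]
      _ = TensorProduct.map β (TensorProduct.map β LinearMap.id) ∘ₗ
            (TensorProduct.assoc F C C M).toLinearMap ∘ₗ TensorProduct.map ΔC αM ∘ₗ δ := by
            rw [hδ]
      _ = (TensorProduct.map β (TensorProduct.map β LinearMap.id) ∘ₗ
            (TensorProduct.assoc F C C M).toLinearMap) ∘ₗ TensorProduct.map ΔC αM ∘ₗ δ := by
            rw [LinearMap.comp_assoc]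
      _ = ((TensorProduct.assoc F C C M).toLinearMap ∘ₗ
            TensorProduct.map (TensorProduct.map β β) LinearMap.id) ∘ₗ
            TensorProduct.map ΔC αM ∘ₗ δ := by rw [aux_assoc]
      _ = (TensorProduct.assoc F C C M).toLinearMap ∘ₗ
            (TensorProduct.map (TensorProduct.map β β) LinearMap.id ∘ₗ
              TensorProduct.map ΔC αM) ∘ₗ δ := by
            rw [LinearMap.comp_assoc, LinearMap.comp_assoc]
      _ = (TensorProduct.assoc F C C M).toLinearMap ∘ₗ
            (TensorProduct.map (TensorProduct.map β β ∘ₗ ΔC) (LinearMap.id ∘ₗ αM)) ∘ₗ δ := by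
            rw [TensorProduct.map_comp]
      _ = (TensorProduct.assoc F C C M).toLinearMap ∘ₗ
            (TensorProduct.map (ΔC ∘ₗ β) (αM ∘ₗ LinearMap.id)) ∘ₗ δ := by
            rw [← hβ, LinearMap.id_comp, LinearMap.comp_id]
      _ = (TensorProduct.assoc F C C M).toLinearMap ∘ₗ
            (TensorProduct.map ΔC αM ∘ₗ TensorProduct.map β LinearMap.id) ∘ₗ δ := by
            rw [TensorProduct.map_comp]
      _ = (TensorProduct.assoc F C C M).toLinearMap ∘ₗ TensorProduct.map ΔC αM ∘ₗ
            (TensorProduct.map β LinearMap.id ∘ₗ δ) := by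
            rw [LinearMap.comp_assoc]

end Aux

/-- Iterated twisting: for every k ≥ 0, (α_C^{2k} ⊗ id_M) ∘ δ is again a
C-comodule structure map on (M, α_M). -/
theorem stmt_13 {F : Type*} [Field F] {C M : Type*}
    [AddCommGroup C] [Module F C] [AddCommGroup M] [Module F M]
    (ΔC : C →ₗ[F] C ⊗[F] C) (αC : C →ₗ[F] C) (αM : M →ₗ[F] M)
    (δ : M →ₗ[F] C ⊗[F] M)
    -- (C, Δ_C, α_C) is a Hom-coassociative coalgebra
    (hcm : ΔC ∘ₗ αC = TensorProduct.map αC αC ∘ₗ ΔC)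
    (hca : TensorProduct.map αC ΔC ∘ₗ ΔC =
      (TensorProduct.assoc F C C C).toLinearMap ∘ₗ TensorProduct.map ΔC αC ∘ₗ ΔC)
    -- δ is a C-comodule structure on (M, α_M)
    (hδm : δ ∘ₗ αM = TensorProduct.map αC αM ∘ₗ δ)
    (hδ : TensorProduct.map αC δ ∘ₗ δ =
      (TensorProduct.assoc F C C M).toLinearMap ∘ₗ TensorProduct.map ΔC αM ∘ₗ δ) :
    ∀ k : ℕ,
      (TensorProduct.map ((αC ^ (2 * k) : Module.End F C)) LinearMap.id ∘ₗ δ) ∘ₗ αM =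
        TensorProduct.map αC αM ∘ₗ
          (TensorProduct.map ((αC ^ (2 * k) : Module.End F C)) LinearMap.id ∘ₗ δ) ∧
      TensorProduct.map αC
          (TensorProduct.map ((αC ^ (2 * k) : Module.End F C)) LinearMap.id ∘ₗ δ) ∘ₗ
          (TensorProduct.map ((αC ^ (2 * k) : Module.End F C)) LinearMap.id ∘ₗ δ) =
        (TensorProduct.assoc F C C M).toLinearMap ∘ₗ TensorProduct.map ΔC αM ∘ₗ
          (TensorProduct.map ((αC ^ (2 * k) : Module.End F C)) LinearMap.id ∘ₗ δ) := by
  -- commuting of powers with αC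
  have hpow : ∀ n : ℕ, ((αC ^ n : Module.End F C) : C →ₗ[F] C) ∘ₗ αC =
      αC ∘ₗ ((αC ^ n : Module.End F C) : C →ₗ[F] C) := by
    intro n
    have : (αC ^ n : Module.End F C) * αC = αC * (αC ^ n : Module.End F C) := by
      rw [← pow_succ, ← pow_succ']
    simpa [Module.End.mul_eq_comp] using this
  have hΔpow : ∀ n : ℕ, ΔC ∘ₗ ((αC ^ n : Module.End F C) : C →ₗ[F] C) =
      TensorProduct.map ((αC ^ n : Module.End F C)) ((αC ^ n : Module.End F C)) ∘ₗ ΔC := by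
    intro n
    induction n with
    | zero => simp [Module.End.one_eq_id, TensorProduct.map_id]
    | succ n ih =>
      have h1 : ((αC ^ (n + 1) : Module.End F C) : C →ₗ[F] C) =
          ((αC ^ n : Module.End F C) : C →ₗ[F] C) ∘ₗ αC := by
        rw [pow_succ]; rfl
      rw [h1, ← LinearMap.comp_assoc, ih, LinearMap.comp_assoc, hcm,
        ← LinearMap.comp_assoc, ← TensorProduct.map_comp]
  intro k
  induction k with
  | zero => simpa [Module.End.one_eq_id, TensorProduct.map_id] using ⟨hδm, hδ⟩
  | succ k ih =>
    have hsplit : (TensorProduct.map ((αC ^ (2 * (k + 1)) : Module.End F C))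
        (LinearMap.id : M →ₗ[F] M) ∘ₗ δ) =
        TensorProduct.map ((αC ^ 2 : Module.End F C)) LinearMap.id ∘ₗ
          (TensorProduct.map ((αC ^ (2 * k) : Module.End F C)) LinearMap.id ∘ₗ δ) := by
      have h1 : ((αC ^ (2 * (k + 1)) : Module.End F C) : C →ₗ[F] C) =
          ((αC ^ 2 : Module.End F C) : C →ₗ[F] C) ∘ₗ
            ((αC ^ (2 * k) : Module.End F C) : C →ₗ[F] C) := by
        rw [show 2 * (k + 1) = 2 + 2 * k by ring, pow_add]; rfl
      rw [h1, ← LinearMap.comp_assoc, ← TensorProduct.map_comp, LinearMap.comp_id]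
    have hβα : ((αC ^ 2 : Module.End F C) : C →ₗ[F] C) ∘ₗ αC =
        αC ∘ₗ ((αC ^ 2 : Module.End F C) : C →ₗ[F] C) := hpow 2
    have hβ := hΔpow 2
    have := aux_step ΔC αC ((αC ^ 2 : Module.End F C)) αM
      (TensorProduct.map ((αC ^ (2 * k) : Module.End F C)) LinearMap.id ∘ₗ δ)
      hβα hβ ih.1 ih.2
    rw [hsplit]
    exact ⟨by rw [LinearMap.comp_assoc]; exact this.1, this.2⟩
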